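/- Let G be a graph in which every vertex of a set S has degree at least d, every set of at most |S| vertices induces at most 3 times as many edges as vertices (in particular S induces at most 3|S| edges), and every two distinct vertices have at most two common neighbors. Let π be a permutation whose support is exactly S. Then π maps at least (d − 8)|S| edges of G to non-edges of G. -/
import Mathlib


/-- Let `G` be a graph in which every vertex of a set `S` has degree
at least `d`, every vertex set of size at most `|S|` induces at most 3 times as
many edges as vertices, and every two distinct vertices have at most two common
neighbors. If `π` is a permutation with support exactly `S`, then `π` maps at
least `(d-8)|S|` edges of `G` to non-edges of `G`. -/
theorem stmt9 {V : Type*} [Fintype V] [DecidableEq V]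
    (G : SimpleGraph V) [DecidableRel G.Adj] (d : ℕ) (S : Finset V)
    (hdeg : ∀ v ∈ S, d ≤ G.degree v)
    (hind : ∀ T : Finset V, T.card ≤ S.card →
      (G.edgeFinset.filter fun e => ∀ x ∈ e, x ∈ T).card ≤ 3 * T.card)
    (hcn : ∀ x y : V, x ≠ y →
      (Finset.univ.filter fun w => G.Adj x w ∧ G.Adj y w).card ≤ 2)
    (π : Equiv.Perm V)
    (hmove : ∀ v ∈ S, π v ≠ v) (hfix : ∀ v ∉ S, π v = v) :
    ((d : ℤ) - 8) * S.card
      ≤ ((G.edgeFinset.filter fun e => e.map π ∉ G.edgeFinset).card : ℤ) := by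
  classical
  rcases S.eq_empty_or_nonempty with hSe | ⟨v0, hv0⟩
  · subst hSe; simp
  set k := S.card with hk
  set Eall := G.edgeFinset with hEall
  set I : Finset (Sym2 V) := Eall.filter (fun e => ∀ x ∈ e, x ∈ S) with hI
  set ES : Finset (Sym2 V) := Eall.filter (fun e => ∃ x ∈ e, x ∈ S) with hESdef
  set B : Finset (Sym2 V) := Eall.filter (fun e => e.map π ∉ G.edgeFinset) with hBdef
  set PS : Finset (Sym2 V) := ES.filter (fun e => e.map π ∈ G.edgeFinset) with hPSdef
  -- induced edge bound
  have hIcard : I.card ≤ 3 * k := by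
    have h := hind S le_rfl
    have : I = G.edgeFinset.filter fun e => ∀ x ∈ e, x ∈ S := by
      simp [hI, hEall]
    rw [this]
    convert h using 2
  -- degree sum bound
  have hdeg_sum : d * k ≤ ES.card + I.card := by
    have h1 : d * k ≤ ∑ v ∈ S, G.degree v := by
      calc d * k = ∑ _v ∈ S, d := by rw [Finset.sum_const, smul_eq_mul, mul_comm]
      _ ≤ ∑ v ∈ S, G.degree v := Finset.sum_le_sum hdeg
    have h2 : ∑ v ∈ S, G.degree v
        = ∑ e ∈ Eall, (S.filter (fun v => v ∈ e)).card := by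
      have : ∀ v, G.degree v = (Eall.filter (fun e => v ∈ e)).card := by
        intro v
        rw [← SimpleGraph.card_incidenceFinset_eq_degree, SimpleGraph.incidenceFinset_eq_filter]
      simp_rw [this, Finset.card_filter]
      exact Finset.sum_comm
    have h3 : ∀ e ∈ Eall, (S.filter (fun v => v ∈ e)).card ≤
        (if (∀ x ∈ e, x ∈ S) then 1 else 0) + (if (∃ x ∈ e, x ∈ S) then 1 else 0) := by
      intro e he
      induction e with
      | _ a b =>
        by_cases ha : a ∈ S <;> by_cases hb : b ∈ S
        · rw [if_pos, if_pos]
          · have hsub : S.filter (fun v => v ∈ s(a, b)) ⊆ {a, b} := by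
              intro v hv
              simp only [Finset.mem_filter, Sym2.mem_iff] at hv
              simp [hv.2]
            calc (S.filter (fun v => v ∈ s(a, b))).card ≤ ({a, b} : Finset V).card :=
                  Finset.card_le_card hsub
              _ ≤ 2 := Finset.card_insert_le _ _ |>.trans (by simp)
          · exact ⟨a, Sym2.mem_mk_left a b, ha⟩
          · intro x hx; rcases Sym2.mem_iff.mp hx with h | h <;> subst h <;> assumption
        · have hsub : S.filter (fun v => v ∈ s(a, b)) ⊆ {a} := by
            intro v hv
            simp only [Finset.mem_filter, Sym2.mem_iff] at hv
            rcases hv.2 with h | h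
            · simp [h]
            · exact absurd (h ▸ hv.1) hb
          rw [if_neg, if_pos]
          · simpa using Finset.card_le_card hsub
          · exact ⟨a, Sym2.mem_mk_left a b, ha⟩
          · intro h; exact hb (h b (Sym2.mem_mk_right a b))
        · have hsub : S.filter (fun v => v ∈ s(a, b)) ⊆ {b} := by
            intro v hv
            simp only [Finset.mem_filter, Sym2.mem_iff] at hv
            rcases hv.2 with h | h
            · exact absurd (h ▸ hv.1) ha
            · simp [h]
          rw [if_neg, if_pos]
          · simpa using Finset.card_le_card hsub
          · exact ⟨b, Sym2.mem_mk_right a b, hb⟩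
          · intro h; exact ha (h a (Sym2.mem_mk_left a b))
        · have hsub : S.filter (fun v => v ∈ s(a, b)) = ∅ := by
            rw [Finset.filter_eq_empty_iff]
            intro v hv h
            rcases Sym2.mem_iff.mp h with h | h <;> exact absurd (h ▸ hv) (by assumption)
          rw [hsub]
          simp
    have h4 : ∑ e ∈ Eall, (S.filter (fun v => v ∈ e)).card ≤ I.card + ES.card := by
      calc ∑ e ∈ Eall, (S.filter (fun v => v ∈ e)).card
          ≤ ∑ e ∈ Eall, ((if (∀ x ∈ e, x ∈ S) then 1 else 0)
              + (if (∃ x ∈ e, x ∈ S) then 1 else 0)) := Finset.sum_le_sum h3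
        _ = I.card + ES.card := by
            rw [Finset.sum_add_distrib, hI, hESdef, Finset.card_filter, Finset.card_filter]
    omega
  -- preserved edges touching S
  have hPScard : PS.card ≤ I.card + 2 * k := by
    set Pout : Finset (Sym2 V) := PS \ I with hPout
    have h0 : PS.card ≤ Pout.card + I.card := Finset.card_le_card_sdiff_add_card
    set f : Sym2 V → V := fun e => if h : ∃ x ∈ e, x ∈ S then h.choose else v0 with hf
    have hfmem : ∀ e ∈ Pout, f e ∈ S ∧ f e ∈ e := by
      intro e he
      have : e ∈ ES := Finset.filter_subset _ _ (Finset.mem_sdiff.mp he).1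
      have hex : ∃ x ∈ e, x ∈ S := (Finset.mem_filter.mp this).2
      rw [hf]
      simp only [dif_pos hex]
      exact ⟨hex.choose_spec.2, hex.choose_spec.1⟩
    have hPoutcard : Pout.card ≤ 2 * k := by
      rw [Finset.card_eq_sum_card_fiberwise (fun e he => (hfmem e he).1)]
      calc ∑ v ∈ S, (Pout.filter (fun e => f e = v)).card ≤ ∑ _v ∈ S, 2 := by
            apply Finset.sum_le_sum
            intro v hv
            have hsub : Pout.filter (fun e => f e = v) ⊆
                (Finset.univ.filter fun w => G.Adj v w ∧ G.Adj (π v) w).image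
                  (fun w => s(v, w)) := by
              intro e he
              obtain ⟨hePout, hfe⟩ := Finset.mem_filter.mp he
              have hve : v ∈ e := hfe ▸ (hfmem e hePout).2
              obtain ⟨w, rfl⟩ := Sym2.mem_iff_exists.mp hve
              obtain ⟨hePS, heI⟩ := Finset.mem_sdiff.mp hePout
              obtain ⟨heES, hemap⟩ := Finset.mem_filter.mp hePS
              have heE : s(v, w) ∈ G.edgeFinset := Finset.filter_subset _ _ heES
              have hadj : G.Adj v w := by
                rwa [SimpleGraph.mem_edgeFinset, SimpleGraph.mem_edgeSet] at heE
              have hwS : w ∉ S := by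
                intro hwS
                apply heI
                rw [hI, Finset.mem_filter]
                refine ⟨heE, ?_⟩
                intro x hx
                rcases Sym2.mem_iff.mp hx with h | h <;> subst h <;> assumption
              have hπw : π w = w := hfix w hwS
              have hadj2 : G.Adj (π v) w := by
                rw [SimpleGraph.mem_edgeFinset, Sym2.map_pair_eq, hπw,
                  SimpleGraph.mem_edgeSet] at hemap
                exact hemap
              exact Finset.mem_image.mpr ⟨w, by simp [hadj, hadj2], rfl⟩
            calc (Pout.filter (fun e => f e = v)).card
                ≤ _ := Finset.card_le_card hsub
              _ ≤ (Finset.univ.filter fun w => G.Adj v w ∧ G.Adj (π v) w).card :=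
                  Finset.card_image_le
              _ ≤ 2 := hcn v (π v) (hmove v hv).symm
        _ = 2 * k := by rw [Finset.sum_const, smul_eq_mul, mul_comm]
    omega
  -- bad edges
  have hEScard : ES.card ≤ PS.card + B.card := by
    have hsplit := Finset.card_filter_add_card_filter_not
      (s := ES) (p := fun e => e.map π ∈ G.edgeFinset)
    have heq : (ES.filter (fun e => e.map π ∈ G.edgeFinset)).card = PS.card := by
      congr 1
    have hsub : ES.filter (fun e => ¬ e.map π ∈ G.edgeFinset) ⊆ B := by
      intro e he
      obtain ⟨heES, hmap⟩ := Finset.mem_filter.mp he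
      exact Finset.mem_filter.mpr ⟨Finset.filter_subset _ _ heES, hmap⟩
    have := Finset.card_le_card hsub
    omega
  have hfinal : d * k ≤ B.card + 8 * k := by omega
  have hBeq : (G.edgeFinset.filter fun e => e.map π ∉ G.edgeFinset).card = B.card := by
    congr 1
  rw [hBeq]
  have : (d * k : ℤ) ≤ B.card + 8 * k := by exact_mod_cast hfinal
  rw [hk] at this ⊢
  linarith
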